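/- For every real number α with 1 < α ≤ 2: c^α_0 > 0, c^α_s = c^α_{−s} for all s ∈ ℤ, and c^α_s ≤ 0 for all s ∈ ℤ with s ≠ 0. -/

import Mathlib

/-- Fractional centered-difference coefficients
`c^α_s = (-1)^s Γ(α+1) / (Γ(α/2 − s + 1) · Γ(α/2 + s + 1))`.
(In Lean, division by zero is zero, matching the stated convention.) -/
noncomputable def cCoef (α : ℝ) (s : ℤ) : ℝ :=
  ((-1 : ℝ) ^ s) * Real.Gamma (α + 1) /
    (Real.Gamma (α / 2 - s + 1) * Real.Gamma (α / 2 + s + 1))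

/-- Sign of Gamma along the negative axis for `1/2 < x < 1`. -/
lemma gamma_alt_sign {x : ℝ} (hx1 : 1/2 < x) (hx2 : x < 1) :
    ∀ n : ℕ, 1 ≤ n → (-1 : ℝ) ^ n * Real.Gamma (x + 1 - n) < 0 := by
  intro n hn
  induction n, hn using Nat.le_induction with
  | base =>
      have : Real.Gamma x > 0 := Real.Gamma_pos_of_pos (by linarith)
      simpa using this
  | succ n hn ih =>
      have hncast : (1 : ℝ) ≤ (n : ℝ) := by exact_mod_cast hn
      have hxn : x - n < 0 := by linarith
      have hrec : Real.Gamma (x + 1 - n) = (x - n) * Real.Gamma (x - n) := by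
        have := Real.Gamma_add_one (s := x - n) (ne_of_lt hxn)
        rw [show x + 1 - n = x - n + 1 by ring]
        exact this
      have key : (-1 : ℝ) ^ n * Real.Gamma (x - n) > 0 := by
        rw [hrec] at ih
        nlinarith [ih, hxn]
      have : ((-1 : ℝ) ^ (n + 1)) * Real.Gamma (x - n) < 0 := by
        rw [pow_succ]
        nlinarith [key]
      rw [show x + 1 - (↑(n + 1) : ℝ) = x - n by push_cast; ring]
      exact this

lemma cCoef_nonpos_pos (α : ℝ) (hα₁ : 1 < α) (hα₂ : α ≤ 2) (n : ℕ) (hn : 1 ≤ n) :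
    cCoef α n ≤ 0 := by
  have hA : 0 < Real.Gamma (α + 1) := Real.Gamma_pos_of_pos (by linarith)
  have hB : 0 < Real.Gamma (α / 2 + n + 1) := by
    have hncast : (1 : ℝ) ≤ (n : ℝ) := by exact_mod_cast hn
    exact Real.Gamma_pos_of_pos (by linarith)
  have hpow : ((-1 : ℝ) ^ (n : ℤ)) = (-1 : ℝ) ^ n := by
    exact_mod_cast zpow_natCast (-1 : ℝ) n
  rcases eq_or_lt_of_le hα₂ with h2 | h2
  · -- α = 2
    subst h2
    rcases eq_or_lt_of_le hn with h1 | h1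
    · -- n = 1
      subst h1
      simp only [cCoef]
      norm_num
    · -- n ≥ 2 : Gamma (2/2 - n + 1) = Gamma (2 - n) = 0
      unfold cCoef
      rw [show (2:ℝ)/2 - ((n:ℤ):ℝ) + 1 = -((n - 2 : ℕ) : ℝ) by
        push_cast [Nat.cast_sub (by omega : 2 ≤ n)]; ring]
      rw [Real.Gamma_neg_nat_eq_zero]
      simp
  · -- α < 2
    set x := α / 2 with hx
    have hx1 : 1/2 < x := by rw [hx]; linarith
    have hx2 : x < 1 := by rw [hx]; linarith
    have hg := gamma_alt_sign hx1 hx2 n hn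
    have hgne : Real.Gamma (x + 1 - n) ≠ 0 := by
      intro h; rw [h] at hg; simp at hg
    have : cCoef α n = ((-1:ℝ)^n * Real.Gamma (x + 1 - n)) * Real.Gamma (α + 1) /
        ((Real.Gamma (x + 1 - n))^2 * Real.Gamma (x + (n:ℝ) + 1)) := by
      rw [cCoef, hpow]
      rw [show α / 2 - ((n:ℤ):ℝ) + 1 = x + 1 - n by push_cast; ring,
        show α / 2 + ((n:ℤ):ℝ) + 1 = x + (n:ℝ) + 1 by push_cast; ring]
      field_simp
    rw [this]
    apply le_of_lt
    apply div_neg_of_neg_of_pos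
    · exact mul_neg_of_neg_of_pos hg hA
    · have h2 : 0 < (Real.Gamma (x + 1 - n))^2 :=
        lt_of_le_of_ne (sq_nonneg _) (Ne.symm (pow_ne_zero 2 hgne))
      exact mul_pos h2 hB

/-- For `1 < α ≤ 2`: `c^α_0 > 0`, `c^α_s = c^α_{-s}` for all `s ∈ ℤ`, and
`c^α_s ≤ 0` for all nonzero `s ∈ ℤ`. -/
theorem cCoef_sign_and_symm (α : ℝ) (hα₁ : 1 < α) (hα₂ : α ≤ 2) :
    0 < cCoef α 0 ∧
    (∀ s : ℤ, cCoef α s = cCoef α (-s)) ∧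
    (∀ s : ℤ, s ≠ 0 → cCoef α s ≤ 0) := by
  have hA : 0 < Real.Gamma (α + 1) := Real.Gamma_pos_of_pos (by linarith)
  have hsymm : ∀ s : ℤ, cCoef α s = cCoef α (-s) := by
    intro s
    unfold cCoef
    rw [zpow_neg, ← inv_zpow, inv_neg, inv_one]
    push_cast
    rw [show α / 2 - (-(s:ℝ)) + 1 = α / 2 + s + 1 by ring,
      show α / 2 + (-(s:ℝ)) + 1 = α / 2 - s + 1 by ring, mul_comm (Real.Gamma (α/2 + s + 1))]
  refine ⟨?_, hsymm, ?_⟩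
  · unfold cCoef
    have h0 : 0 < Real.Gamma (α / 2 + 1) := Real.Gamma_pos_of_pos (by linarith)
    simp only [Int.cast_zero, sub_zero, add_zero, zpow_zero, one_mul]
    positivity
  · intro s hs
    rcases lt_or_gt_of_ne hs with h | h
    · rw [hsymm s]
      have : (0:ℤ) < -s := by omega
      have := cCoef_nonpos_pos α hα₁ hα₂ (-s).toNat (by omega)
      rwa [show ((-s).toNat : ℤ) = -s by omega] at this
    · have := cCoef_nonpos_pos α hα₁ hα₂ s.toNat (by omega)
      rwa [show (s.toNat : ℤ) = s by omega] at this
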